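/- Let N ≥ 1 be an integer and b ∈ ℝ with b ≠ 0. Let z₁, …, z_N : ℝ → ℝ be differentiable functions such that z₁(t), …, z_N(t) are pairwise distinct for every t ∈ ℝ, let A, A₄ : ℝ → ℝ and α : ℝ × ℝ → ℝ be arbitrary functions, define γ(z, t) := b · ∏_{k=1}^{N} (z − z_k(t)) and c(t) := −b · ∑_{j=1}^{N} z_j(t). If for every z ∈ ℝ and every t ∈ ℝ one has ∂_t γ(z,t) = −2 (A(t) z + A₄(t)) γ(z,t) + 2 (b z² + c(t) z) α(z, t), then for every k ∈ {1,…,N} and every t ∈ ℝ, z_k'(t) = 2 w_k(t) · ( ∑_{j≠k} z_j(t) ) / ∏_{j≠k} ( z_k(t) − z_j(t) ), where w_k(t) := z_k(t) · α(z_k(t), t). -/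

import Mathlib

theorem separation_variables_evolutionary_flow (N : ℕ) (hN : 1 ≤ N)
    (b : ℝ) (hb : b ≠ 0)
    (zf : Fin N → ℝ → ℝ) (hdiff : ∀ k, Differentiable ℝ (zf k))
    (hdistinct : ∀ t : ℝ, Function.Injective fun k => zf k t)
    (A A₄ : ℝ → ℝ) (α : ℝ × ℝ → ℝ)
    (hflow : ∀ z t : ℝ,
      deriv (fun t' => b * ∏ k : Fin N, (z - zf k t')) t
        = -2 * (A t * z + A₄ t) * (b * ∏ k : Fin N, (z - zf k t))
          + 2 * (b * z ^ 2 + (-b * ∑ j : Fin N, zf j t) * z) * α (z, t)) :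
    ∀ (k : Fin N) (t : ℝ),
      deriv (zf k) t
        = 2 * (zf k t * α (zf k t, t)) * (∑ j ∈ Finset.univ.erase k, zf j t)
            / ∏ j ∈ Finset.univ.erase k, (zf k t - zf j t) := by
  intro k t
  set x := zf k t with hx
  have hprod : HasDerivAt (fun t' => ∏ i : Fin N, (x - zf i t'))
      (∑ i : Fin N, (∏ j ∈ Finset.univ.erase i, (x - zf j t)) • (-(deriv (zf i) t))) t := by
    apply HasDerivAt.fun_finsetProd
    intro i _
    exact ((hdiff i t).hasDerivAt.const_sub x)
  have hLHS : HasDerivAt (fun t' => b * ∏ i : Fin N, (x - zf i t'))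
      (b * ∑ i : Fin N, (∏ j ∈ Finset.univ.erase i, (x - zf j t)) • (-(deriv (zf i) t))) t :=
    hprod.const_mul b
  have heq := hflow x t
  rw [hLHS.deriv] at heq
  -- the sum reduces to the k-term
  have hsum : (∑ i : Fin N, (∏ j ∈ Finset.univ.erase i, (x - zf j t)) • (-(deriv (zf i) t)))
      = (∏ j ∈ Finset.univ.erase k, (x - zf j t)) * (-(deriv (zf k) t)) := by
    rw [← Finset.add_sum_erase _ _ (Finset.mem_univ k)]
    rw [smul_eq_mul]
    have : ∀ i ∈ Finset.univ.erase k,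
        (∏ j ∈ Finset.univ.erase i, (x - zf j t)) • (-(deriv (zf i) t)) = 0 := by
      intro i hi
      have hik : i ≠ k := Finset.ne_of_mem_erase hi
      have : (∏ j ∈ Finset.univ.erase i, (x - zf j t)) = 0 :=
        Finset.prod_eq_zero (Finset.mem_erase.2 ⟨hik.symm, Finset.mem_univ k⟩) (by simp [hx])
      simp [this]
    rw [Finset.sum_eq_zero this, add_zero]
  rw [hsum] at heq
  have hγ0 : (∏ i : Fin N, (x - zf i t)) = 0 :=
    Finset.prod_eq_zero (Finset.mem_univ k) (by simp [hx])
  rw [hγ0] at heq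
  have hS : (∑ j : Fin N, zf j t) = x + ∑ j ∈ Finset.univ.erase k, zf j t := by
    rw [← Finset.add_sum_erase _ _ (Finset.mem_univ k)]
  rw [hS] at heq
  have hP : (∏ j ∈ Finset.univ.erase k, (x - zf j t)) ≠ 0 := by
    apply Finset.prod_ne_zero_iff.2
    intro j hj
    have : zf j t ≠ x := fun h => (Finset.ne_of_mem_erase hj) (hdistinct t h)
    exact sub_ne_zero.2 (Ne.symm this)
  have hkey : deriv (zf k) t * (∏ j ∈ Finset.univ.erase k, (x - zf j t))
      = 2 * (x * α (x, t)) * (∑ j ∈ Finset.univ.erase k, zf j t) := by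
    apply mul_left_cancel₀ hb
    linear_combination -heq
  rw [eq_div_iff hP]
  linear_combination hkey
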